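/- (Unbiasedness of the IPTW estimating function, stratified HRMSM) Suppose consistency, temporal ordering, SRA, and positivity hold, and suppose the HRMSM is correctly specified: E[Y_{ā(t-s+1,t)}(t+1) | V(t-s+1)] = m_t(ā(t-s+1,t), V(t-s+1) | β*) for all regimens ā(t-s+1,t), where V(t-s+1) is a function of (Ā(t-s), L̄(t-s+1)). Then for every bounded function h of (Ā(t-s+1,t), V(t-s+1)), the IPTW estimating function has mean zero at β*: E[ h(Ā(t-s+1,t), V(t-s+1)) · (Y(t+1) − m_t(Ā(t-s+1,t), V(t-s+1) | β*)) / ∏_{j=t-s+1}^{t} g(A(j) | Ā(j-1), L̄(j)) ] = 0. -/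
import Mathlib

open Finset
open scoped Classical

noncomputable section

def pr {Ω : Type} [Fintype Ω] (μ : Ω → ℝ) (E : Ω → Prop) : ℝ :=
  ∑ ω, if E ω then μ ω else 0

def cpr {Ω : Type} [Fintype Ω] (μ : Ω → ℝ) (E F : Ω → Prop) : ℝ :=
  pr μ (fun ω => E ω ∧ F ω) / pr μ F

def ex {Ω : Type} [Fintype Ω] (μ : Ω → ℝ) (f : Ω → ℝ) : ℝ :=
  ∑ ω, f ω * μ ω

def cex {Ω : Type} [Fintype Ω] (μ : Ω → ℝ) (f : Ω → ℝ) (F : Ω → Prop) : ℝ :=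
  (∑ ω, if F ω then f ω * μ ω else 0) / pr μ F

section Helpers

variable {Ω : Type} [Fintype Ω]

lemma pr_congr' (μ : Ω → ℝ) {E F : Ω → Prop} (h : ∀ ω, E ω ↔ F ω) : pr μ E = pr μ F := by
  have : E = F := funext fun ω => propext (h ω)
  rw [this]

lemma cpr_congr' (μ : Ω → ℝ) {E E' F F' : Ω → Prop} (hE : ∀ ω, E ω ↔ E' ω)
    (hF : ∀ ω, F ω ↔ F' ω) : cpr μ E F = cpr μ E' F' := by
  unfold cpr
  rw [pr_congr' μ hF, pr_congr' μ (E := fun ω => E ω ∧ F ω) (F := fun ω => E' ω ∧ F' ω)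
    (fun ω => and_congr (hE ω) (hF ω))]

lemma pr_nonneg' (μ : Ω → ℝ) (hμ : ∀ ω, 0 ≤ μ ω) (E : Ω → Prop) : 0 ≤ pr μ E :=
  Finset.sum_nonneg fun ω _ => by by_cases hE : E ω <;> simp [hE, hμ ω]

lemma pr_mono' (μ : Ω → ℝ) (hμ : ∀ ω, 0 ≤ μ ω) {E F : Ω → Prop} (h : ∀ ω, E ω → F ω) :
    pr μ E ≤ pr μ F := by
  apply Finset.sum_le_sum
  intro ω _
  by_cases hE : E ω
  · rw [if_pos hE, if_pos (h ω hE)]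
  · rw [if_neg hE]
    by_cases hF : F ω <;> simp [hF, hμ ω]

lemma exists_of_pr_pos (μ : Ω → ℝ) (hμ : ∀ ω, 0 ≤ μ ω) {F : Ω → Prop} (h : 0 < pr μ F) :
    ∃ ω, F ω ∧ 0 < μ ω := by
  by_contra hc
  push_neg at hc
  have h0 : pr μ F = 0 := by
    apply Finset.sum_eq_zero; intro ω _
    by_cases hF : F ω
    · rw [if_pos hF]; exact le_antisymm (hc ω hF) (hμ ω)
    · rw [if_neg hF]
  linarith

lemma mu_zero_of_pr_zero (μ : Ω → ℝ) (hμ : ∀ ω, 0 ≤ μ ω) {F : Ω → Prop}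
    (h : pr μ F = 0) : ∀ ω, F ω → μ ω = 0 := by
  intro ω hF
  have := (Finset.sum_eq_zero_iff_of_nonneg (fun ω' _ => by
    by_cases hF' : F ω' <;> simp [hF', hμ ω'])).mp h ω (Finset.mem_univ ω)
  simpa [hF] using this

lemma pr_and_eq (μ : Ω → ℝ) (E F : Ω → Prop) (h : pr μ F ≠ 0) :
    pr μ (fun ω => E ω ∧ F ω) = cpr μ E F * pr μ F := by
  unfold cpr; rw [div_mul_cancel₀ _ h]

lemma sum_fiber {β : Type} (d : Ω → β) (f : Ω → ℝ) :
    ∑ ω, f ω = ∑ y ∈ Finset.univ.image d, ∑ ω, if d ω = y then f ω else 0 := by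
  rw [Finset.sum_comm]
  refine Finset.sum_congr rfl fun ω _ => ?_
  rw [Finset.sum_ite_eq]
  simp

end Helpers

section Helpers2
variable {Ω : Type} [Fintype Ω]

lemma sum_fiber_eq {β : Type} (d : Ω → β) (f g : Ω → ℝ)
    (H : ∀ ω₀ : Ω, (∑ ω, if d ω = d ω₀ then f ω else 0)
      = ∑ ω, if d ω = d ω₀ then g ω else 0) :
    (∑ ω, f ω) = ∑ ω, g ω := by
  rw [sum_fiber d f, sum_fiber d g]
  refine Finset.sum_congr rfl fun y hy => ?_
  obtain ⟨ω₀, -, rfl⟩ := Finset.mem_image.mp hy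
  exact H ω₀

lemma sum_fiber_zero {β : Type} (d : Ω → β) (f : Ω → ℝ)
    (H : ∀ ω₀ : Ω, (∑ ω, if d ω = d ω₀ then f ω else 0) = 0) :
    (∑ ω, f ω) = 0 := by
  rw [sum_fiber d f]
  refine Finset.sum_eq_zero fun y hy => ?_
  obtain ⟨ω₀, -, rfl⟩ := Finset.mem_image.mp hy
  exact H ω₀

end Helpers2
def wgt {Ω 𝒜 ℒ : Type} [Fintype Ω] (μ : Ω → ℝ) (A : ℕ → Ω → 𝒜) (L : ℕ → Ω → ℒ)
    (j : ℕ) (ω : Ω) : ℝ :=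
  cpr μ (fun ω' => A j ω' = A j ω)
    (fun ω' => (∀ i < j, A i ω' = A i ω) ∧ (∀ i ≤ j, L i ω' = L i ω))

def Ssum {Ω 𝒜 ℒ 𝒱 : Type} [Fintype Ω] (μ : Ω → ℝ) (A : ℕ → Ω → 𝒜) (L : ℕ → Ω → ℒ)
    (CL : (ℕ → 𝒜) → ℕ → Ω → ℒ) (Y : ℒ → ℝ) (V : Ω → 𝒱) (h m : (ℕ → 𝒜) → 𝒱 → ℝ)
    (u t : ℕ) (p : ℕ → 𝒜) (k : ℕ) : ℝ :=
  ∑ ω, if (∀ i, u ≤ i → i < k → A i ω = p i)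
    then h p (V ω) * (Y (CL (fun i => if i < u then A i ω else p i) (t + 1) ω) - m p (V ω))
      * μ ω / ∏ j ∈ Finset.Ico u k, wgt μ A L j ω
    else 0

def cell {Ω 𝒜 ℒ : Type} (A : ℕ → Ω → 𝒜) (L : ℕ → Ω → ℒ) (CL : (ℕ → 𝒜) → ℕ → Ω → ℒ)
    (k : ℕ) (ω : Ω) : (ℕ → Option 𝒜) × (ℕ → Option ℒ) × ((ℕ → 𝒜) → ℕ → ℒ) :=
  (fun i => if i < k then some (A i ω) else none,
   fun i => if i ≤ k then some (L i ω) else none,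
   fun a jj => CL a jj ω)

def canon {Ω 𝒜 : Type} (A : ℕ → Ω → 𝒜) (u t : ℕ) (ω : Ω) : ℕ → 𝒜 :=
  fun i => if u ≤ i ∧ i ≤ t then A i ω else A u ω

lemma cell_eq_iff {Ω 𝒜 ℒ : Type} (A : ℕ → Ω → 𝒜) (L : ℕ → Ω → ℒ)
    (CL : (ℕ → 𝒜) → ℕ → Ω → ℒ) (k : ℕ) (ω ω₀ : Ω) :
    cell A L CL k ω = cell A L CL k ω₀ ↔
      ((∀ i < k, A i ω = A i ω₀) ∧ (∀ i ≤ k, L i ω = L i ω₀)) ∧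
      (∀ (ar : ℕ → 𝒜) (jj : ℕ), CL ar jj ω = CL ar jj ω₀) := by
  unfold cell
  rw [Prod.mk.injEq, Prod.mk.injEq]
  constructor
  · rintro ⟨h1, h2, h3⟩
    refine ⟨⟨fun i hi => ?_, fun i hi => ?_⟩, fun ar jj => ?_⟩
    · have := congrFun h1 i
      rw [if_pos hi, if_pos hi] at this
      exact Option.some.inj this
    · have := congrFun h2 i
      rw [if_pos hi, if_pos hi] at this
      exact Option.some.inj this
    · exact congrFun (congrFun h3 ar) jj
  · rintro ⟨⟨hA, hL⟩, hX⟩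
    refine ⟨funext fun i => ?_, funext fun i => ?_, funext fun ar => funext fun jj => hX ar jj⟩
    · by_cases hi : i < k
      · rw [if_pos hi, if_pos hi, hA i hi]
      · rw [if_neg hi, if_neg hi]
    · by_cases hi : i ≤ k
      · rw [if_pos hi, if_pos hi, hL i hi]
      · rw [if_neg hi, if_neg hi]
lemma step {Ω 𝒜 ℒ 𝒱 : Type} [Fintype Ω]
    (μ : Ω → ℝ) (hμ : ∀ ω, 0 ≤ μ ω)
    (A : ℕ → Ω → 𝒜) (L : ℕ → Ω → ℒ) (CL : (ℕ → 𝒜) → ℕ → Ω → ℒ)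
    (Y : ℒ → ℝ) (V : Ω → 𝒱) (h m : (ℕ → 𝒜) → 𝒱 → ℝ)
    (u t : ℕ) (p : ℕ → 𝒜) (k : ℕ) (hk1 : u ≤ k) (hk2 : k ≤ t)
    (SRAk : ∀ (a : 𝒜) (x : (ℕ → 𝒜) → ℕ → ℒ) (ab : ℕ → 𝒜) (lb : ℕ → ℒ),
      pr μ (fun ω => (∀ i < k, A i ω = ab i) ∧ (∀ i ≤ k, L i ω = lb i)) > 0 →
      cpr μ (fun ω => A k ω = a ∧ ∀ (ar : ℕ → 𝒜) (jj : ℕ), CL ar jj ω = x ar jj)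
        (fun ω => (∀ i < k, A i ω = ab i) ∧ (∀ i ≤ k, L i ω = lb i)) =
      cpr μ (fun ω => A k ω = a)
        (fun ω => (∀ i < k, A i ω = ab i) ∧ (∀ i ≤ k, L i ω = lb i)) *
      cpr μ (fun ω => ∀ (ar : ℕ → 𝒜) (jj : ℕ), CL ar jj ω = x ar jj)
        (fun ω => (∀ i < k, A i ω = ab i) ∧ (∀ i ≤ k, L i ω = lb i)))
    (POSk : ∀ (a : 𝒜) (ω : Ω), μ ω > 0 →
      cpr μ (fun ω' => A k ω' = a)
        (fun ω' => (∀ i < k, A i ω' = A i ω) ∧ (∀ i ≤ k, L i ω' = L i ω)) > 0)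
    (hV : ∀ ω ω', (∀ i < u, A i ω = A i ω') → (∀ i ≤ u, L i ω = L i ω') → V ω = V ω') :
    Ssum μ A L CL Y V h m u t p (k + 1) = Ssum μ A L CL Y V h m u t p k := by
  classical
  unfold Ssum
  refine sum_fiber_eq (cell A L CL k) _ _ fun ω₀ => ?_
  set C : ℝ := h p (V ω₀) *
      (Y (CL (fun i => if i < u then A i ω₀ else p i) (t + 1) ω₀) - m p (V ω₀)) with hCdef
  set P0 : ℝ := ∏ j ∈ Finset.Ico u k, wgt μ A L j ω₀ with hP0def
  set W' : ℝ := cpr μ (fun ω' => A k ω' = p k)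
      (fun ω' => (∀ i < k, A i ω' = A i ω₀) ∧ (∀ i ≤ k, L i ω' = L i ω₀)) with hWdef
  -- cell-constancy of the integrand pieces
  have hGc : ∀ ω, cell A L CL k ω = cell A L CL k ω₀ →
      h p (V ω) * (Y (CL (fun i => if i < u then A i ω else p i) (t + 1) ω) - m p (V ω)) = C := by
    intro ω hc
    obtain ⟨⟨hA, hL⟩, hX⟩ := (cell_eq_iff A L CL k ω ω₀).mp hc
    have hVeq : V ω = V ω₀ :=
      hV ω ω₀ (fun i hi => hA i (lt_of_lt_of_le hi hk1)) (fun i hi => hL i (le_trans hi hk1))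
    have hblend : (fun i => if i < u then A i ω else p i)
        = (fun i => if i < u then A i ω₀ else p i) := by
      funext i
      by_cases hi : i < u
      · rw [if_pos hi, if_pos hi, hA i (lt_of_lt_of_le hi hk1)]
      · rw [if_neg hi, if_neg hi]
    rw [hCdef, hVeq, hblend, hX]
  have hprod : ∀ ω, cell A L CL k ω = cell A L CL k ω₀ →
      ∏ j ∈ Finset.Ico u k, wgt μ A L j ω = P0 := by
    intro ω hc
    obtain ⟨⟨hA, hL⟩, -⟩ := (cell_eq_iff A L CL k ω ω₀).mp hc
    rw [hP0def]
    refine Finset.prod_congr rfl fun j hj => ?_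
    have hjk : j < k := (Finset.mem_Ico.mp hj).2
    unfold wgt
    refine cpr_congr' μ (fun ω' => ?_) (fun ω' => ?_)
    · rw [hA j hjk]
    · constructor
      · rintro ⟨u1, u2⟩
        exact ⟨fun i hi => (u1 i hi).trans (hA i (hi.trans hjk)),
          fun i hi => (u2 i hi).trans (hL i (le_of_lt (lt_of_le_of_lt hi hjk)))⟩
      · rintro ⟨u1, u2⟩
        exact ⟨fun i hi => (u1 i hi).trans (hA i (hi.trans hjk)).symm,
          fun i hi => (u2 i hi).trans (hL i (le_of_lt (lt_of_le_of_lt hi hjk))).symm⟩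
  have hwk : ∀ ω, cell A L CL k ω = cell A L CL k ω₀ → A k ω = p k →
      wgt μ A L k ω = W' := by
    intro ω hc hak
    obtain ⟨⟨hA, hL⟩, -⟩ := (cell_eq_iff A L CL k ω ω₀).mp hc
    rw [hWdef]
    unfold wgt
    refine cpr_congr' μ (fun ω' => ?_) (fun ω' => ?_)
    · rw [hak]
    · constructor
      · rintro ⟨u1, u2⟩
        exact ⟨fun i hi => (u1 i hi).trans (hA i hi),
          fun i hi => (u2 i hi).trans (hL i hi)⟩
      · rintro ⟨u1, u2⟩
        exact ⟨fun i hi => (u1 i hi).trans (hA i hi).symm,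
          fun i hi => (u2 i hi).trans (hL i hi).symm⟩
  -- termwise rewriting of the two fiber sums
  have hL1 : ∀ ω : Ω,
      (@ite ℝ (cell A L CL k ω = cell A L CL k ω₀) (Classical.propDecidable _)
        (if (∀ i, u ≤ i → i < k + 1 → A i ω = p i)
          then h p (V ω) * (Y (CL (fun i => if i < u then A i ω else p i) (t + 1) ω) - m p (V ω))
            * μ ω / ∏ j ∈ Finset.Ico u (k + 1), wgt μ A L j ω
          else 0) 0)
      = (@ite ℝ (∀ i, u ≤ i → i < k → A i ω₀ = p i) (Classical.propDecidable _)
          (C / (P0 * W')) 0) *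
        (@ite ℝ (cell A L CL k ω = cell A L CL k ω₀ ∧ A k ω = p k) (Classical.propDecidable _)
          (μ ω) 0) := by
    intro ω
    by_cases hc : cell A L CL k ω = cell A L CL k ω₀
    · rw [if_pos hc]
      obtain ⟨⟨hA, hL⟩, hX⟩ := (cell_eq_iff A L CL k ω ω₀).mp hc
      by_cases hi0 : ∀ i, u ≤ i → i < k → A i ω₀ = p i
      · rw [if_pos hi0]
        by_cases hak : A k ω = p k
        · have hind : ∀ i, u ≤ i → i < k + 1 → A i ω = p i := by
            intro i h1 h2
            rcases Nat.lt_succ_iff_lt_or_eq.mp h2 with h2' | rfl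
            · exact (hA i h2').trans (hi0 i h1 h2')
            · exact hak
          have hcc : cell A L CL k ω = cell A L CL k ω₀ ∧ A k ω = p k := ⟨hc, hak⟩
          rw [if_pos hind, if_pos hcc,
            Finset.prod_Ico_succ_top hk1, hGc ω hc, hprod ω hc, hwk ω hc hak]
          ring
        · have hind : ¬(∀ i, u ≤ i → i < k + 1 → A i ω = p i) :=
            fun hind => hak (hind k hk1 (Nat.lt_succ_self k))
          have hcc : ¬(cell A L CL k ω = cell A L CL k ω₀ ∧ A k ω = p k) :=
            fun hx => hak hx.2
          rw [if_neg hind, if_neg hcc, mul_zero]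
      · have hind : ¬(∀ i, u ≤ i → i < k + 1 → A i ω = p i) := fun hind =>
          hi0 fun i h1 h2 => (hA i h2).symm.trans (hind i h1 (Nat.lt_succ_of_lt h2))
        rw [if_neg hi0, if_neg hind, zero_mul]
    · have hcc : ¬(cell A L CL k ω = cell A L CL k ω₀ ∧ A k ω = p k) :=
        fun hx => hc hx.1
      rw [if_neg hc, if_neg hcc, mul_zero]
  have hL2 : ∀ ω : Ω,
      (@ite ℝ (cell A L CL k ω = cell A L CL k ω₀) (Classical.propDecidable _)
        (if (∀ i, u ≤ i → i < k → A i ω = p i)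
          then h p (V ω) * (Y (CL (fun i => if i < u then A i ω else p i) (t + 1) ω) - m p (V ω))
            * μ ω / ∏ j ∈ Finset.Ico u k, wgt μ A L j ω
          else 0) 0)
      = (@ite ℝ (∀ i, u ≤ i → i < k → A i ω₀ = p i) (Classical.propDecidable _)
          (C / P0) 0) *
        (@ite ℝ (cell A L CL k ω = cell A L CL k ω₀) (Classical.propDecidable _)
          (μ ω) 0) := by
    intro ω
    by_cases hc : cell A L CL k ω = cell A L CL k ω₀
    · rw [if_pos hc, if_pos hc]
      obtain ⟨⟨hA, hL⟩, hX⟩ := (cell_eq_iff A L CL k ω ω₀).mp hc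
      by_cases hi0 : ∀ i, u ≤ i → i < k → A i ω₀ = p i
      · have hind : ∀ i, u ≤ i → i < k → A i ω = p i :=
          fun i h1 h2 => (hA i h2).trans (hi0 i h1 h2)
        rw [if_pos hi0, if_pos hind, hGc ω hc, hprod ω hc]
        ring
      · have hind : ¬(∀ i, u ≤ i → i < k → A i ω = p i) := fun hind =>
          hi0 fun i h1 h2 => (hA i h2).symm.trans (hind i h1 h2)
        rw [if_neg hi0, if_neg hind, zero_mul]
    · rw [if_neg hc, if_neg hc, mul_zero]
  rw [Finset.sum_congr rfl fun ω _ => hL1 ω, Finset.sum_congr rfl fun ω _ => hL2 ω,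
    ← Finset.mul_sum, ← Finset.mul_sum]
  -- now a scalar identity involving pr
  by_cases hi0 : ∀ i, u ≤ i → i < k → A i ω₀ = p i
  swap
  · rw [if_neg hi0, if_neg hi0, zero_mul, zero_mul]
  rw [if_pos hi0, if_pos hi0]
  have hsum1 : (∑ ω, @ite ℝ (cell A L CL k ω = cell A L CL k ω₀ ∧ A k ω = p k)
        (Classical.propDecidable _) (μ ω) 0)
      = pr μ (fun ω => cell A L CL k ω = cell A L CL k ω₀ ∧ A k ω = p k) := rfl
  have hsum2 : (∑ ω, @ite ℝ (cell A L CL k ω = cell A L CL k ω₀)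
        (Classical.propDecidable _) (μ ω) 0)
      = pr μ (fun ω => cell A L CL k ω = cell A L CL k ω₀) := rfl
  rw [hsum1, hsum2]
  by_cases hstrat : pr μ (fun ω' => (∀ i < k, A i ω' = A i ω₀) ∧ (∀ i ≤ k, L i ω' = L i ω₀)) = 0
  · have hz1 : pr μ (fun ω => cell A L CL k ω = cell A L CL k ω₀ ∧ A k ω = p k) = 0 := by
      refine le_antisymm ?_ (pr_nonneg' μ hμ _)
      refine le_trans (pr_mono' μ hμ fun ω hω => ?_) (le_of_eq hstrat)
      exact ((cell_eq_iff A L CL k ω ω₀).mp hω.1).1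
    have hz2 : pr μ (fun ω => cell A L CL k ω = cell A L CL k ω₀) = 0 := by
      refine le_antisymm ?_ (pr_nonneg' μ hμ _)
      refine le_trans (pr_mono' μ hμ fun ω hω => ?_) (le_of_eq hstrat)
      exact ((cell_eq_iff A L CL k ω ω₀).mp hω).1
    rw [hz1, hz2, mul_zero, mul_zero]
  · have hpos : 0 < pr μ (fun ω' => (∀ i < k, A i ω' = A i ω₀) ∧ (∀ i ≤ k, L i ω' = L i ω₀)) :=
      lt_of_le_of_ne (pr_nonneg' μ hμ _) (Ne.symm hstrat)
    obtain ⟨ω₁, hω₁s, hω₁μ⟩ := exists_of_pr_pos μ hμ hpos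
    have hWpos : 0 < W' := by
      have hP := POSk (p k) ω₁ hω₁μ
      have heq : cpr μ (fun ω' => A k ω' = p k)
          (fun ω' => (∀ i < k, A i ω' = A i ω₁) ∧ (∀ i ≤ k, L i ω' = L i ω₁)) = W' := by
        rw [hWdef]
        refine cpr_congr' μ (fun ω' => Iff.rfl) (fun ω' => ?_)
        constructor
        · rintro ⟨u1, u2⟩
          exact ⟨fun i hi => (u1 i hi).trans (hω₁s.1 i hi),
            fun i hi => (u2 i hi).trans (hω₁s.2 i hi)⟩
        · rintro ⟨u1, u2⟩
          exact ⟨fun i hi => (u1 i hi).trans (hω₁s.1 i hi).symm,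
            fun i hi => (u2 i hi).trans (hω₁s.2 i hi).symm⟩
      rw [← heq]
      exact hP
    have hSRA : cpr μ (fun ω => A k ω = p k ∧ ∀ (ar : ℕ → 𝒜) (jj : ℕ), CL ar jj ω = CL ar jj ω₀)
          (fun ω => (∀ i < k, A i ω = A i ω₀) ∧ (∀ i ≤ k, L i ω = L i ω₀))
        = W' * cpr μ (fun ω => ∀ (ar : ℕ → 𝒜) (jj : ℕ), CL ar jj ω = CL ar jj ω₀)
          (fun ω => (∀ i < k, A i ω = A i ω₀) ∧ (∀ i ≤ k, L i ω = L i ω₀)) :=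
      SRAk (p k) (fun ar jj => CL ar jj ω₀) (fun i => A i ω₀) (fun i => L i ω₀) hpos
    have e1 : pr μ (fun ω => cell A L CL k ω = cell A L CL k ω₀ ∧ A k ω = p k)
        = W' * cpr μ (fun ω => ∀ (ar : ℕ → 𝒜) (jj : ℕ), CL ar jj ω = CL ar jj ω₀)
            (fun ω => (∀ i < k, A i ω = A i ω₀) ∧ (∀ i ≤ k, L i ω = L i ω₀)) *
          pr μ (fun ω' => (∀ i < k, A i ω' = A i ω₀) ∧ (∀ i ≤ k, L i ω' = L i ω₀)) := by
      rw [pr_congr' μ (F := fun ω =>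
          (A k ω = p k ∧ ∀ (ar : ℕ → 𝒜) (jj : ℕ), CL ar jj ω = CL ar jj ω₀) ∧
          ((∀ i < k, A i ω = A i ω₀) ∧ (∀ i ≤ k, L i ω = L i ω₀)))
        (fun ω => by
          constructor
          · rintro ⟨hc, hak⟩
            obtain ⟨hst, hXX⟩ := (cell_eq_iff A L CL k ω ω₀).mp hc
            exact ⟨⟨hak, hXX⟩, hst⟩
          · rintro ⟨⟨hak, hXX⟩, hst⟩
            exact ⟨(cell_eq_iff A L CL k ω ω₀).mpr ⟨hst, hXX⟩, hak⟩)]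
      rw [pr_and_eq μ _ _ hstrat, hSRA]
    have e2 : pr μ (fun ω => cell A L CL k ω = cell A L CL k ω₀)
        = cpr μ (fun ω => ∀ (ar : ℕ → 𝒜) (jj : ℕ), CL ar jj ω = CL ar jj ω₀)
            (fun ω => (∀ i < k, A i ω = A i ω₀) ∧ (∀ i ≤ k, L i ω = L i ω₀)) *
          pr μ (fun ω' => (∀ i < k, A i ω' = A i ω₀) ∧ (∀ i ≤ k, L i ω' = L i ω₀)) := by
      rw [pr_congr' μ (F := fun ω =>
          (∀ (ar : ℕ → 𝒜) (jj : ℕ), CL ar jj ω = CL ar jj ω₀) ∧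
          ((∀ i < k, A i ω = A i ω₀) ∧ (∀ i ≤ k, L i ω = L i ω₀)))
        (fun ω => by
          constructor
          · intro hc
            obtain ⟨hst, hXX⟩ := (cell_eq_iff A L CL k ω ω₀).mp hc
            exact ⟨hXX, hst⟩
          · rintro ⟨hXX, hst⟩
            exact (cell_eq_iff A L CL k ω ω₀).mpr ⟨hst, hXX⟩)]
      rw [pr_and_eq μ _ _ hstrat]
    rw [e1, e2]
    have halg : ∀ (c pz q1 q2 wv : ℝ), wv ≠ 0 →
        c / (pz * wv) * (wv * q1 * q2) = c / pz * (q1 * q2) := by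
      intro c pz q1 q2 wv hw
      rw [← div_div, show wv * q1 * q2 = wv * (q1 * q2) from by ring, ← mul_assoc,
        div_mul_cancel₀ _ hw]
    exact halg _ _ _ _ _ (ne_of_gt hWpos)
lemma base {Ω 𝒜 ℒ 𝒱 : Type} [Fintype Ω]
    (μ : Ω → ℝ) (hμ : ∀ ω, 0 ≤ μ ω)
    (A : ℕ → Ω → 𝒜) (L : ℕ → Ω → ℒ) (CL : (ℕ → 𝒜) → ℕ → Ω → ℒ)
    (Y : ℒ → ℝ) (V : Ω → 𝒱) (h m : (ℕ → 𝒜) → 𝒱 → ℝ)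
    (u t : ℕ) (p : ℕ → 𝒜)
    (hmodelp : ∀ v : 𝒱, pr μ (fun ω => V ω = v) > 0 →
      cex μ (fun ω => Y (CL (fun i => if i < u then A i ω else p i) (t + 1) ω))
        (fun ω => V ω = v) = m p v) :
    Ssum μ A L CL Y V h m u t p u = 0 := by
  classical
  unfold Ssum
  have hsimp : ∀ ω : Ω,
      (if (∀ i, u ≤ i → i < u → A i ω = p i)
        then h p (V ω) * (Y (CL (fun i => if i < u then A i ω else p i) (t + 1) ω) - m p (V ω))
          * μ ω / ∏ j ∈ Finset.Ico u u, wgt μ A L j ω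
        else 0)
      = h p (V ω) * (Y (CL (fun i => if i < u then A i ω else p i) (t + 1) ω) - m p (V ω))
          * μ ω := by
    intro ω
    have hvac : ∀ i, u ≤ i → i < u → A i ω = p i :=
      fun i h1 h2 => absurd (lt_of_le_of_lt h1 h2) (lt_irrefl u)
    rw [if_pos hvac, Finset.Ico_self, Finset.prod_empty, div_one]
  rw [Finset.sum_congr rfl fun ω _ => hsimp ω]
  refine sum_fiber_zero V _ fun ω₀ => ?_
  by_cases hp0 : pr μ (fun ω => V ω = V ω₀) = 0
  · refine Finset.sum_eq_zero fun ω _ => ?_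
    by_cases hv : V ω = V ω₀
    · rw [if_pos hv, mu_zero_of_pr_zero μ hμ hp0 ω hv, mul_zero]
    · rw [if_neg hv]
  · have hppos : 0 < pr μ (fun ω => V ω = V ω₀) :=
      lt_of_le_of_ne (pr_nonneg' μ hμ _) (Ne.symm hp0)
    have hm' := hmodelp (V ω₀) hppos
    simp only [cex] at hm'
    rw [div_eq_iff hp0] at hm'
    have hterm : ∀ ω : Ω,
        (if V ω = V ω₀
          then h p (V ω) * (Y (CL (fun i => if i < u then A i ω else p i) (t + 1) ω) - m p (V ω))
            * μ ω
          else 0)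
        = h p (V ω₀) *
            (if V ω = V ω₀
              then Y (CL (fun i => if i < u then A i ω else p i) (t + 1) ω) * μ ω else 0)
          - h p (V ω₀) * m p (V ω₀) * (if V ω = V ω₀ then μ ω else 0) := by
      intro ω
      by_cases hv : V ω = V ω₀
      · rw [if_pos hv, if_pos hv, if_pos hv, hv]
        ring
      · rw [if_neg hv, if_neg hv, if_neg hv]
        ring
    rw [Finset.sum_congr rfl fun ω _ => hterm ω, Finset.sum_sub_distrib,
      ← Finset.mul_sum, ← Finset.mul_sum, hm']
    have hpr : (∑ ω, if V ω = V ω₀ then μ ω else 0) = pr μ (fun ω => V ω = V ω₀) := rfl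
    rw [hpr]
    ring
/-- Unbiasedness of the IPTW estimating function for a stratified,
correctly specified HRMSM. -/
theorem hrmsm_iptw_unbiased
    {Ω 𝒜 ℒ 𝒱 : Type} [Fintype Ω]
    (μ : Ω → ℝ) (hμ : ∀ ω, 0 ≤ μ ω) (hsum : ∑ ω, μ ω = 1)
    (K s : ℕ) (hs : 1 ≤ s) (hsK : s ≤ K + 1)
    (A : ℕ → Ω → 𝒜) (CL : (ℕ → 𝒜) → ℕ → Ω → ℒ) (L : ℕ → Ω → ℒ) (Y : ℒ → ℝ)
    (hTO : ∀ (a a' : ℕ → 𝒜) (j : ℕ), (∀ i < j, a i = a' i) → ∀ ω, CL a j ω = CL a' j ω)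
    (hcons : ∀ j ω, L j ω = CL (fun i => A i ω) j ω)
    (SRA : ∀ j ≤ K, ∀ (a : 𝒜) (x : (ℕ → 𝒜) → ℕ → ℒ) (ab : ℕ → 𝒜) (lb : ℕ → ℒ),
      pr μ (fun ω => (∀ i < j, A i ω = ab i) ∧ (∀ i ≤ j, L i ω = lb i)) > 0 →
      cpr μ (fun ω => A j ω = a ∧ ∀ (ar : ℕ → 𝒜) (jj : ℕ), CL ar jj ω = x ar jj)
        (fun ω => (∀ i < j, A i ω = ab i) ∧ (∀ i ≤ j, L i ω = lb i)) =
      cpr μ (fun ω => A j ω = a)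
        (fun ω => (∀ i < j, A i ω = ab i) ∧ (∀ i ≤ j, L i ω = lb i)) *
      cpr μ (fun ω => ∀ (ar : ℕ → 𝒜) (jj : ℕ), CL ar jj ω = x ar jj)
        (fun ω => (∀ i < j, A i ω = ab i) ∧ (∀ i ≤ j, L i ω = lb i)))
    (t : ℕ) (ht1 : s - 1 ≤ t) (ht2 : t ≤ K)
    (POS : ∀ j, t + 1 - s ≤ j → j ≤ t → ∀ (a : 𝒜) (ω : Ω), μ ω > 0 →
      cpr μ (fun ω' => A j ω' = a)
        (fun ω' => (∀ i < j, A i ω' = A i ω) ∧ (∀ i ≤ j, L i ω' = L i ω)) > 0)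
    (V : Ω → 𝒱)
    (hV : ∀ ω ω', (∀ i < t + 1 - s, A i ω = A i ω') →
      (∀ i ≤ t + 1 - s, L i ω = L i ω') → V ω = V ω')
    (m : (ℕ → 𝒜) → 𝒱 → ℝ)
    (hm : ∀ (a a' : ℕ → 𝒜) (v : 𝒱), (∀ i, t + 1 - s ≤ i → i ≤ t → a i = a' i) →
      m a v = m a' v)
    (hmodel : ∀ (ab : ℕ → 𝒜) (v : 𝒱), pr μ (fun ω => V ω = v) > 0 →
      cex μ (fun ω => Y (CL (fun i => if i < t + 1 - s then A i ω else ab i) (t + 1) ω))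
        (fun ω => V ω = v) = m ab v)
    (h : (ℕ → 𝒜) → 𝒱 → ℝ)
    (hh : ∀ (a a' : ℕ → 𝒜) (v : 𝒱), (∀ i, t + 1 - s ≤ i → i ≤ t → a i = a' i) →
      h a v = h a' v) :
    ex μ (fun ω => h (fun i => A i ω) (V ω) *
      (Y (L (t + 1) ω) - m (fun i => A i ω) (V ω)) /
      ∏ j ∈ Finset.Ico (t + 1 - s) (t + 1),
        cpr μ (fun ω' => A j ω' = A j ω)
          (fun ω' => (∀ i < j, A i ω' = A i ω) ∧ (∀ i ≤ j, L i ω' = L i ω))) = 0 := by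
  classical
  have hut : t + 1 - s ≤ t := by omega
  -- each sliced (pattern-restricted) weighted sum vanishes
  have key : ∀ p : ℕ → 𝒜, Ssum μ A L CL Y V h m (t + 1 - s) t p (t + 1) = 0 := by
    intro p
    have hbase : Ssum μ A L CL Y V h m (t + 1 - s) t p (t + 1 - s) = 0 :=
      base μ hμ A L CL Y V h m (t + 1 - s) t p (fun v hv => hmodel p v hv)
    have hstep' : ∀ k, t + 1 - s ≤ k → k ≤ t →
        Ssum μ A L CL Y V h m (t + 1 - s) t p (k + 1)
          = Ssum μ A L CL Y V h m (t + 1 - s) t p k :=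
      fun k h1 h2 => step μ hμ A L CL Y V h m (t + 1 - s) t p k h1 h2
        (fun a x ab lb hpr => SRA k (le_trans h2 ht2) a x ab lb hpr)
        (fun a ω hω => POS k h1 h2 a ω hω) hV
    have H : ∀ n, t + 1 - s ≤ n → n ≤ t + 1 →
        Ssum μ A L CL Y V h m (t + 1 - s) t p n = 0 := by
      intro n
      induction n with
      | zero =>
        intro h1 _
        have h0 : t + 1 - s = 0 := Nat.le_zero.mp h1
        rw [h0] at hbase ⊢
        exact hbase
      | succ n ih =>
        intro h1 h2
        by_cases hn : t + 1 - s = n + 1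
        · rw [← hn]
          exact hbase
        · have h1' : t + 1 - s ≤ n := by omega
          rw [hstep' n h1' (by omega)]
          exact ih h1' (by omega)
    exact H (t + 1) (by omega) le_rfl
  simp only [ex]
  refine sum_fiber_zero (canon A (t + 1 - s) t) _ fun ω₀ => ?_
  refine Eq.trans ?_ (key (canon A (t + 1 - s) t ω₀))
  unfold Ssum
  refine Finset.sum_congr rfl fun ω _ => ?_
  by_cases hc : canon A (t + 1 - s) t ω = canon A (t + 1 - s) t ω₀
  · have hwin : ∀ i, t + 1 - s ≤ i → i ≤ t → A i ω = canon A (t + 1 - s) t ω₀ i := by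
      intro i h1 h2
      have hcond : t + 1 - s ≤ i ∧ i ≤ t := ⟨h1, h2⟩
      have hthis := congrFun hc i
      unfold canon at hthis
      rw [if_pos hcond, if_pos hcond] at hthis
      show A i ω = canon A (t + 1 - s) t ω₀ i
      unfold canon
      rw [if_pos hcond]
      exact hthis
    have hind : ∀ i, t + 1 - s ≤ i → i < t + 1 → A i ω = canon A (t + 1 - s) t ω₀ i :=
      fun i h1 h2 => hwin i h1 (by omega)
    rw [if_pos hc, if_pos hind]
    have h1 : h (fun i => A i ω) (V ω) = h (canon A (t + 1 - s) t ω₀) (V ω) :=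
      hh _ _ _ (fun i hi1 hi2 => hwin i hi1 hi2)
    have h2 : m (fun i => A i ω) (V ω) = m (canon A (t + 1 - s) t ω₀) (V ω) :=
      hm _ _ _ (fun i hi1 hi2 => hwin i hi1 hi2)
    have h3 : Y (L (t + 1) ω) = Y (CL (fun i =>
        if i < t + 1 - s then A i ω else canon A (t + 1 - s) t ω₀ i) (t + 1) ω) := by
      rw [hcons (t + 1) ω]
      refine congrArg Y (hTO _ _ (t + 1) (fun i hi => ?_) ω)
      by_cases hiu : i < t + 1 - s
      · rw [if_pos hiu]
      · rw [if_neg hiu]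
        exact hwin i (not_lt.mp hiu) (by omega)
    rw [h1, h2, h3]
    unfold wgt
    ring
  · have hnind : ¬(∀ i, t + 1 - s ≤ i → i < t + 1 → A i ω = canon A (t + 1 - s) t ω₀ i) := by
      intro hw
      apply hc
      funext i
      show (if t + 1 - s ≤ i ∧ i ≤ t then A i ω else A (t + 1 - s) ω)
        = (if t + 1 - s ≤ i ∧ i ≤ t then A i ω₀ else A (t + 1 - s) ω₀)
      have hbase' : ∀ i', t + 1 - s ≤ i' → i' ≤ t → A i' ω = A i' ω₀ := by
        intro i' hi1 hi2
        have := hw i' hi1 (by omega)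
        have hcond : t + 1 - s ≤ i' ∧ i' ≤ t := ⟨hi1, hi2⟩
        unfold canon at this
        rw [if_pos hcond] at this
        exact this
      by_cases hcond : t + 1 - s ≤ i ∧ i ≤ t
      · rw [if_pos hcond, if_pos hcond]
        exact hbase' i hcond.1 hcond.2
      · rw [if_neg hcond, if_neg hcond]
        exact hbase' (t + 1 - s) le_rfl hut
    rw [if_neg hc, if_neg hnind]
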